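/- In Algorithm 3, the stage-k updated levels are nondecreasing in k: assuming |R_{ij(k)}| is nondecreasing in k for every family F_{ij}, the sequences α_{1j(k)} and α_{2l(k)} are nondecreasing in k, and each is bounded above: α_{1j(k)} ≤ α_{1j} + ∑_l g_{2l1j} α_{2l} and α_{2l(k)} ≤ α_{2l} + ∑_j g_{1j2l} (α_{1j} + ∑_{l'} g_{2l'1j} α_{2l'}). -/

import Mathlib

/-- In Algorithm 3, assuming rejection counts are nondecreasing in the stage
index, the updated local levels are nondecreasing in the stage index and
bounded above by their worst-case values. -/
theorem two_layer_levels_monotone_bounded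
    (m1 m2 : ℕ) (hm1 : 0 < m1) (hm2 : 0 < m2)
    (n1 : Fin m1 → ℕ) (n2 : Fin m2 → ℕ)
    (hn1 : ∀ j, 0 < n1 j) (hn2 : ∀ l, 0 < n2 l)
    (a1 : Fin m1 → ℝ) (a2 : Fin m2 → ℝ)
    (ha1 : ∀ j, 0 ≤ a1 j) (ha2 : ∀ l, 0 ≤ a2 l)
    (g12 : Fin m1 → Fin m2 → ℝ) (g21 : Fin m2 → Fin m1 → ℝ)
    (hg12 : ∀ j l, 0 ≤ g12 j l ∧ g12 j l ≤ 1)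
    (hg21 : ∀ l j, 0 ≤ g21 l j ∧ g21 l j ≤ 1)
    (R1 : Fin m1 → ℕ → ℕ) (R2 : Fin m2 → ℕ → ℕ)
    (hR1mono : ∀ j k, R1 j k ≤ R1 j (k + 1)) (hR1 : ∀ j k, R1 j k ≤ n1 j)
    (hR2mono : ∀ l k, R2 l k ≤ R2 l (k + 1)) (hR2 : ∀ l k, R2 l k ≤ n2 l)
    (A1 : Fin m1 → ℕ → ℝ) (A2 : Fin m2 → ℕ → ℝ)
    (hA1one : ∀ j, A1 j 1 = a1 j)
    (hA1 : ∀ k, 2 ≤ k → ∀ j, A1 j k = a1 j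
      + ∑ l, ((R2 l (k - 1) : ℝ) / n2 l) * g21 l j * a2 l)
    (hA2 : ∀ k, 1 ≤ k → ∀ l, A2 l k = a2 l
      + ∑ j, ((R1 j k : ℝ) / n1 j) * g12 j l * A1 j k) :
    ∀ k, 1 ≤ k →
      (∀ j, A1 j k ≤ A1 j (k + 1)) ∧ (∀ l, A2 l k ≤ A2 l (k + 1))
      ∧ (∀ j, A1 j k ≤ a1 j + ∑ l, g21 l j * a2 l)
      ∧ (∀ l, A2 l k ≤ a2 l
          + ∑ j, g12 j l * (a1 j + ∑ l', g21 l' j * a2 l')) := by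
  intro k hk
  -- basic nonnegativity of ratios
  have hr2 : ∀ (l : Fin m2) (m : ℕ), 0 ≤ ((R2 l m : ℝ) / n2 l) := by
    intro l m; positivity
  have hr1 : ∀ (j : Fin m1) (m : ℕ), 0 ≤ ((R1 j m : ℝ) / n1 j) := by
    intro j m; positivity
  have hr2le : ∀ (l : Fin m2) (m : ℕ), ((R2 l m : ℝ) / n2 l) ≤ 1 := by
    intro l m
    rw [div_le_one (by exact_mod_cast hn2 l)]
    exact_mod_cast hR2 l m
  have hr1le : ∀ (j : Fin m1) (m : ℕ), ((R1 j m : ℝ) / n1 j) ≤ 1 := by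
    intro j m
    rw [div_le_one (by exact_mod_cast hn1 j)]
    exact_mod_cast hR1 j m
  have hA1nn : ∀ m, 1 ≤ m → ∀ j, 0 ≤ A1 j m := by
    intro m hm j
    rcases eq_or_lt_of_le hm with h | h
    · rw [← h, hA1one]; exact ha1 j
    · rw [hA1 m h j]
      refine add_nonneg (ha1 j) (Finset.sum_nonneg fun l _ => ?_)
      exact mul_nonneg (mul_nonneg (hr2 l _) (hg21 l j).1) (ha2 l)
  have hA1bd : ∀ m, 1 ≤ m → ∀ j, A1 j m ≤ a1 j + ∑ l, g21 l j * a2 l := by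
    intro m hm j
    rcases eq_or_lt_of_le hm with h | h
    · rw [← h, hA1one]
      refine le_add_of_nonneg_right (Finset.sum_nonneg fun l _ => ?_)
      exact mul_nonneg (hg21 l j).1 (ha2 l)
    · rw [hA1 m h j]
      refine add_le_add_right (Finset.sum_le_sum fun l _ => ?_) _
      rw [mul_assoc]
      calc ((R2 l (m-1) : ℝ) / n2 l) * (g21 l j * a2 l)
          ≤ 1 * (g21 l j * a2 l) := by
            exact mul_le_mul_of_nonneg_right (hr2le l _)
              (mul_nonneg (hg21 l j).1 (ha2 l))
        _ = g21 l j * a2 l := one_mul _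
  have hA1mono : ∀ m, 1 ≤ m → ∀ j, A1 j m ≤ A1 j (m + 1) := by
    intro m hm j
    rcases eq_or_lt_of_le hm with h | h
    · rw [← h, hA1one, hA1 2 le_rfl j]
      refine le_add_of_nonneg_right (Finset.sum_nonneg fun l _ => ?_)
      exact mul_nonneg (mul_nonneg (hr2 l _) (hg21 l j).1) (ha2 l)
    · rw [hA1 m h j, hA1 (m+1) (by omega) j]
      refine add_le_add_right (Finset.sum_le_sum fun l _ => ?_) _
      have h1 : m - 1 + 1 = m := by omega
      have h2 : m + 1 - 1 = m := by omega
      have hRle : ((R2 l (m-1) : ℝ)) ≤ (R2 l (m+1-1) : ℝ) := by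
        rw [h2]
        exact_mod_cast h1 ▸ hR2mono l (m-1)
      refine mul_le_mul_of_nonneg_right
        (mul_le_mul_of_nonneg_right ?_ (hg21 l j).1) (ha2 l)
      exact (div_le_div_iff_of_pos_right (by exact_mod_cast hn2 l)).2 hRle
  have hA2bd : ∀ m, 1 ≤ m → ∀ l, A2 l m ≤ a2 l
      + ∑ j, g12 j l * (a1 j + ∑ l', g21 l' j * a2 l') := by
    intro m hm l
    rw [hA2 m hm l]
    refine add_le_add_right (Finset.sum_le_sum fun j _ => ?_) _
    refine mul_le_mul ?_ (hA1bd m hm j) (hA1nn m hm j) (hg12 j l).1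
    have h := mul_le_mul_of_nonneg_right (hr1le j m) (hg12 j l).1
    simpa using h
  have hA2mono : ∀ m, 1 ≤ m → ∀ l, A2 l m ≤ A2 l (m + 1) := by
    intro m hm l
    rw [hA2 m hm l, hA2 (m+1) (by omega) l]
    refine add_le_add_right (Finset.sum_le_sum fun j _ => ?_) _
    have hRle : ((R1 j m : ℝ)) ≤ (R1 j (m+1) : ℝ) := by
      exact_mod_cast hR1mono j m
    refine mul_le_mul (mul_le_mul_of_nonneg_right
      ((div_le_div_iff_of_pos_right (by exact_mod_cast hn1 j : (0:ℝ) < n1 j)).2 hRle) (hg12 j l).1)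
      (hA1mono m hm j) (hA1nn m hm j)
      (mul_nonneg (hr1 j (m+1)) (hg12 j l).1)
  exact ⟨hA1mono k hk, hA2mono k hk, hA1bd k hk, hA2bd k hk⟩
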